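/- arXiv:1610.09596 — 6 statements merged into one kernel-verified Lean document; each statement's English description precedes it below -/
import Mathlib

section
/- Let m, n, p, q ∈ ℕ with 1 ≤ m < n, 1 ≤ p < q, let α, β, γ, δ ∈ ℂ, and set φ(z) := α z^n + β z^m + γ z̄^p + δ z̄^q. For every k ∈ ℕ with k ≥ max{n, q}, one has Σ_{j=0}^∞ (j+1)·|∫_𝔻 φ(z) z^k · conj(z^j) dA(z)|² − Σ_{j=0}^∞ (j+1)·|∫_𝔻 conj(φ(z)) z^k · conj(z^j) dA(z)|² = (1/(k+1)²)·( |α|²n²/(k+n+1) + |β|²m²/(k+m+1) − |γ|²p²/(k+p+1) − |δ|²q²/(k+q+1) ). (The left-hand side equals ⟨[T_φ*, T_φ] z^k, z^k⟩ = ‖P(φ z^k)‖² − ‖P(φ̄ z^k)‖² for the Toeplitz operator T_φ on the Bergman space.) -/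
open MeasureTheory Complex Metric

/-- The normalized area measure on the open unit disk `𝔻 ⊆ ℂ`. -/
noncomputable def dA : Measure ℂ :=
  (ENNReal.ofReal (Real.pi)⁻¹) • (volume.restrict (ball (0 : ℂ) 1))

set_option maxHeartbeats 2000000

open Set
lemma ang (a b : ℕ) (hab : a ≠ b) :
    ∫ θ : ℝ in Ioo (-Real.pi) Real.pi, Complex.exp ((((a:ℝ) - b) * θ) * Complex.I) = 0 := by
  have hle : (-Real.pi) ≤ Real.pi := by linarith [Real.pi_pos]
  set c : ℂ := ((a:ℂ) - b) * Complex.I with hcdef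
  have hc : c ≠ 0 := by
    simp only [hcdef, ne_eq, mul_eq_zero, Complex.I_ne_zero, or_false, sub_eq_zero]
    exact fun h => hab (by exact_mod_cast h)
  have key : ∫ θ in (-Real.pi)..Real.pi, Complex.exp (c * θ)
      = (Complex.exp (c * Real.pi) - Complex.exp (c * (-Real.pi : ℝ))) / c :=
    integral_exp_mul_complex hc
  have h2 : Complex.exp (c * Real.pi) = Complex.exp (c * (-Real.pi : ℝ)) := by
    calc Complex.exp (c * Real.pi)
        = Complex.exp (c * (-Real.pi : ℝ) + (((a:ℤ) - b : ℤ) : ℂ) * (2 * Real.pi * Complex.I)) := by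
          congr 1; simp only [hcdef]; push_cast; ring
      _ = Complex.exp (c * (-Real.pi : ℝ)) * Complex.exp ((((a:ℤ) - b : ℤ) : ℂ) * (2 * Real.pi * Complex.I)) := Complex.exp_add _ _
      _ = Complex.exp (c * (-Real.pi : ℝ)) := by rw [Complex.exp_int_mul_two_pi_mul_I, mul_one]
  rw [intervalIntegral.integral_of_le hle, MeasureTheory.integral_Ioc_eq_integral_Ioo] at key
  have : ∫ θ : ℝ in Ioo (-Real.pi) Real.pi, Complex.exp ((((a:ℝ) - b) * θ) * Complex.I)
      = ∫ θ : ℝ in Ioo (-Real.pi) Real.pi, Complex.exp (c * θ) := by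
    apply setIntegral_congr_fun measurableSet_Ioo
    intro θ _
    simp only [hcdef]
    push_cast
    ring_nf
  rw [this, key, h2, sub_self, zero_div]

lemma ballInt (a b : ℕ) :
    ∫ z in ball (0:ℂ) 1, z ^ a * (starRingEnd ℂ z) ^ b
      = if a = b then ((Real.pi / (a + 1) : ℝ) : ℂ) else 0 := by
  set f : ℂ → ℂ := fun z => z ^ a * (starRingEnd ℂ z) ^ b with hf
  have h1 : ∫ z in ball (0:ℂ) 1, f z = ∫ z : ℂ, (ball (0:ℂ) 1).indicator f z := by
    rw [integral_indicator measurableSet_ball]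
  rw [h1, ← Complex.integral_comp_polarCoord_symm]
  set R : ℝ → ℂ := fun r => if r < 1 then (r:ℂ) ^ (a + b + 1) else 0 with hR
  set A : ℝ → ℂ := fun θ => Complex.exp ((((a:ℝ) - b) * θ) * Complex.I) with hA
  have h2 : ∫ p in polarCoord.target, p.1 • (ball (0:ℂ) 1).indicator f (Complex.polarCoord.symm p)
      = ∫ p in Ioi (0:ℝ) ×ˢ Ioo (-Real.pi) Real.pi, R p.1 * A p.2 := by
    rw [polarCoord_target]
    apply setIntegral_congr_fun (measurableSet_Ioi.prod measurableSet_Ioo)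
    rintro ⟨r, θ⟩ ⟨hr, -⟩
    simp only [Set.mem_Ioi] at hr
    have habs : ‖Complex.polarCoord.symm (r, θ)‖ = r := by
      rw [Complex.norm_polarCoord_symm]; exact abs_of_pos hr
    have hsymm : Complex.polarCoord.symm (r, θ) = (r:ℂ) * Complex.exp ((θ:ℂ) * Complex.I) := by
      rw [Complex.polarCoord_symm_apply, Complex.exp_mul_I]
      push_cast
      ring
    have hval : f (Complex.polarCoord.symm (r, θ))
        = (r:ℂ) ^ (a + b) * A θ := by
      rw [hsymm]
      simp only [hf, hA]
      rw [map_mul, Complex.conj_ofReal, ← Complex.exp_conj]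
      have hconj : (starRingEnd ℂ) ((θ:ℂ) * Complex.I) = -((θ:ℂ) * Complex.I) := by
        simp [Complex.conj_I, Complex.conj_ofReal]
      rw [hconj, mul_pow, mul_pow, ← Complex.exp_nat_mul, ← Complex.exp_nat_mul]
      have harg : (a:ℂ) * ((θ:ℂ) * Complex.I) + (b:ℂ) * (-((θ:ℂ) * Complex.I))
          = ((((a:ℝ) - b) * θ) : ℝ) * Complex.I := by push_cast; ring
      rw [mul_mul_mul_comm, ← Complex.exp_add, harg, ← pow_add]
      norm_cast
    dsimp only
    by_cases hlt : r < 1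
    · have hmem : Complex.polarCoord.symm (r, θ) ∈ ball (0:ℂ) 1 := by
        rw [mem_ball_zero_iff, habs]; exact hlt
      rw [Set.indicator_of_mem hmem, hval]
      show (r : ℝ) • ((r:ℂ) ^ (a + b) * A θ) = R r * A θ
      rw [hR]
      simp only [if_pos hlt]
      rw [Complex.real_smul]
      ring
    · have hmem : Complex.polarCoord.symm (r, θ) ∉ ball (0:ℂ) 1 := by
        rw [mem_ball_zero_iff, habs]; exact hlt
      rw [Set.indicator_of_notMem hmem]
      show (r : ℝ) • (0:ℂ) = R r * A θ
      rw [hR]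
      simp only [if_neg hlt]
      simp
  rw [h2, Measure.volume_eq_prod, setIntegral_prod_mul]
  have hrad : ∫ r in Ioi (0:ℝ), R r = ((1 / (a + b + 2) : ℝ) : ℂ) := by
    have e : EqOn R ((Iio (1:ℝ)).indicator (fun r => (r:ℂ) ^ (a + b + 1))) (Ioi (0:ℝ)) := by
      intro r hr
      simp [hR, indicator, mem_Iio]
    rw [setIntegral_congr_fun measurableSet_Ioi e, integral_indicator measurableSet_Iio,
      Measure.restrict_restrict measurableSet_Iio, inter_comm, Ioi_inter_Iio]
    have e2 : (fun r : ℝ => (r:ℂ) ^ (a + b + 1)) = fun r : ℝ => ((r ^ (a + b + 1) : ℝ) : ℂ) := by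
      ext r; push_cast; ring
    have e3 : ∫ r in Ioo (0:ℝ) 1, r ^ (a + b + 1) = 1 / (a + b + 2) := by
      rw [← integral_Ioc_eq_integral_Ioo,
        ← intervalIntegral.integral_of_le (by norm_num : (0:ℝ) ≤ 1), integral_pow]
      push_cast
      norm_num
      ring
    rw [e2]
    calc ∫ r in Ioo (0:ℝ) 1, (fun r : ℝ => ((r ^ (a + b + 1) : ℝ) : ℂ)) r ∂volume
        = ((∫ r in Ioo (0:ℝ) 1, r ^ (a + b + 1) ∂volume : ℝ) : ℂ) := integral_ofReal
      _ = ((1 / (a + b + 2) : ℝ) : ℂ) := by rw [e3]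
  rw [hrad]
  by_cases hab : a = b
  · subst hab
    have hA1 : ∀ θ : ℝ, A θ = 1 := by
      intro θ; simp [hA]
    simp only [hA1]
    rw [integral_const, measureReal_def, Measure.restrict_apply_univ, Real.volume_Ioo, if_pos trivial]
    have h2pi : (Real.pi - -Real.pi) = 2 * Real.pi := by ring
    rw [h2pi, ENNReal.toReal_ofReal (by positivity)]
    rw [Complex.real_smul, mul_one, ← Complex.ofReal_mul]
    congr 1
    have hne : ((a:ℝ) + a + 2) ≠ 0 := by positivity
    field_simp
    ring
  · rw [hA, ang a b hab, mul_zero, if_neg hab]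

lemma intg (a b : ℕ) : Integrable (fun z : ℂ => z ^ a * (starRingEnd ℂ z) ^ b) dA := by
  have hcont : Continuous fun z : ℂ => z ^ a * (starRingEnd ℂ z) ^ b := by
    continuity
  have h1 : IntegrableOn (fun z : ℂ => z ^ a * (starRingEnd ℂ z) ^ b) (closedBall (0:ℂ) 1)
      volume := hcont.continuousOn.integrableOn_compact (isCompact_closedBall 0 1)
  have h2 : IntegrableOn (fun z : ℂ => z ^ a * (starRingEnd ℂ z) ^ b) (ball (0:ℂ) 1) volume :=
    h1.mono_set ball_subset_closedBall
  rw [dA]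
  exact h2.smul_measure ENNReal.ofReal_ne_top

lemma dAInt (a b : ℕ) :
    ∫ z : ℂ, z ^ a * (starRingEnd ℂ z) ^ b ∂dA
      = if a = b then ((1 / (a + 1) : ℝ) : ℂ) else 0 := by
  rw [dA, integral_smul_measure, ENNReal.toReal_ofReal (by positivity), ballInt]
  by_cases hab : a = b
  · rw [if_pos hab, if_pos hab, Complex.real_smul, ← Complex.ofReal_mul]
    congr 1
    have : ((a:ℝ) + 1) ≠ 0 := by positivity
    field_simp
  · rw [if_neg hab, if_neg hab, smul_zero]

/-- The diagonal entry A₀₀ = ⟨[T_φ*, T_φ] z^k, z^k⟩ = ‖P(φ z^k)‖² - ‖P(φ̄ z^k)‖²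
for φ = α z^n + β z^m + γ z̄^p + δ z̄^q. -/
theorem statement4 (m n p q : ℕ) (hm : 1 ≤ m) (hmn : m < n) (hp : 1 ≤ p) (hpq : p < q)
    (α β γ δ : ℂ) (φ : ℂ → ℂ)
    (hφ : ∀ z : ℂ, φ z = α * z ^ n + β * z ^ m
        + γ * (starRingEnd ℂ z) ^ p + δ * (starRingEnd ℂ z) ^ q)
    (k : ℕ) (hk : max n q ≤ k) :
    (∑' j : ℕ, ((j : ℝ) + 1)
        * ‖∫ z : ℂ, φ z * z ^ k * (starRingEnd ℂ (z ^ j)) ∂dA‖ ^ 2)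
      - (∑' j : ℕ, ((j : ℝ) + 1)
        * ‖∫ z : ℂ, (starRingEnd ℂ (φ z)) * z ^ k
            * (starRingEnd ℂ (z ^ j)) ∂dA‖ ^ 2)
    = (1 / ((k : ℝ) + 1) ^ 2)
      * (‖α‖ ^ 2 * (n : ℝ) ^ 2 / ((k : ℝ) + (n : ℝ) + 1)
        + ‖β‖ ^ 2 * (m : ℝ) ^ 2 / ((k : ℝ) + (m : ℝ) + 1)
        - ‖γ‖ ^ 2 * (p : ℝ) ^ 2 / ((k : ℝ) + (p : ℝ) + 1)
        - ‖δ‖ ^ 2 * (q : ℝ) ^ 2 / ((k : ℝ) + (q : ℝ) + 1)) := by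
  have hnk : n ≤ k := le_trans (le_max_left _ _) hk
  have hqk : q ≤ k := le_trans (le_max_right _ _) hk
  have hmk : m ≤ k := le_trans hmn.le hnk
  have hpk : p ≤ k := le_trans hpq.le hqk
  -- value of the first integral
  have key1 : ∀ j : ℕ, (∫ z : ℂ, φ z * z ^ k * (starRingEnd ℂ (z ^ j)) ∂dA)
      = α * (if k + n = j then ((1 / ((k + n : ℕ) + 1 : ℝ)) : ℂ) else 0)
      + (β * (if k + m = j then ((1 / ((k + m : ℕ) + 1 : ℝ)) : ℂ) else 0)
      + (γ * (if k = p + j then ((1 / ((k : ℕ) + 1 : ℝ)) : ℂ) else 0)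
      + δ * (if k = q + j then ((1 / ((k : ℕ) + 1 : ℝ)) : ℂ) else 0))) := by
    intro j
    have hfun : (fun z : ℂ => φ z * z ^ k * (starRingEnd ℂ (z ^ j)))
        = fun z : ℂ => α * (z ^ (k + n) * (starRingEnd ℂ z) ^ j)
          + (β * (z ^ (k + m) * (starRingEnd ℂ z) ^ j)
          + (γ * (z ^ k * (starRingEnd ℂ z) ^ (p + j))
          + δ * (z ^ k * (starRingEnd ℂ z) ^ (q + j)))) := by
      funext z
      rw [hφ z, map_pow]
      ring
    have I1 : Integrable (fun z : ℂ => α * (z ^ (k + n) * (starRingEnd ℂ z) ^ j)) dA :=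
      (intg (k + n) j).const_mul α
    have I2 : Integrable (fun z : ℂ => β * (z ^ (k + m) * (starRingEnd ℂ z) ^ j)) dA :=
      (intg (k + m) j).const_mul β
    have I3 : Integrable (fun z : ℂ => γ * (z ^ k * (starRingEnd ℂ z) ^ (p + j))) dA :=
      (intg k (p + j)).const_mul γ
    have I4 : Integrable (fun z : ℂ => δ * (z ^ k * (starRingEnd ℂ z) ^ (q + j))) dA :=
      (intg k (q + j)).const_mul δ
    have I34 : Integrable (fun z : ℂ => γ * (z ^ k * (starRingEnd ℂ z) ^ (p + j))
        + δ * (z ^ k * (starRingEnd ℂ z) ^ (q + j))) dA := I3.add I4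
    have I234 : Integrable (fun z : ℂ => β * (z ^ (k + m) * (starRingEnd ℂ z) ^ j)
        + (γ * (z ^ k * (starRingEnd ℂ z) ^ (p + j))
          + δ * (z ^ k * (starRingEnd ℂ z) ^ (q + j)))) dA := I2.add I34
    rw [hfun, integral_add I1 I234, integral_add I2 I34, integral_add I3 I4,
      integral_const_mul, integral_const_mul, integral_const_mul, integral_const_mul,
      dAInt, dAInt, dAInt, dAInt]
    norm_cast
  -- value of the second integral
  have key2 : ∀ j : ℕ, (∫ z : ℂ, (starRingEnd ℂ (φ z)) * z ^ k * (starRingEnd ℂ (z ^ j)) ∂dA)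
      = (starRingEnd ℂ γ) * (if k + p = j then ((1 / ((k + p : ℕ) + 1 : ℝ)) : ℂ) else 0)
      + ((starRingEnd ℂ δ) * (if k + q = j then ((1 / ((k + q : ℕ) + 1 : ℝ)) : ℂ) else 0)
      + ((starRingEnd ℂ α) * (if k = n + j then ((1 / ((k : ℕ) + 1 : ℝ)) : ℂ) else 0)
      + (starRingEnd ℂ β) * (if k = m + j then ((1 / ((k : ℕ) + 1 : ℝ)) : ℂ) else 0))) := by
    intro j
    have hfun : (fun z : ℂ => (starRingEnd ℂ (φ z)) * z ^ k * (starRingEnd ℂ (z ^ j)))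
        = fun z : ℂ => (starRingEnd ℂ γ) * (z ^ (k + p) * (starRingEnd ℂ z) ^ j)
          + ((starRingEnd ℂ δ) * (z ^ (k + q) * (starRingEnd ℂ z) ^ j)
          + ((starRingEnd ℂ α) * (z ^ k * (starRingEnd ℂ z) ^ (n + j))
          + (starRingEnd ℂ β) * (z ^ k * (starRingEnd ℂ z) ^ (m + j)))) := by
      funext z
      rw [hφ z]
      simp only [map_add, map_mul, map_pow, Complex.conj_conj]
      ring
    have I1 : Integrable (fun z : ℂ => (starRingEnd ℂ γ) * (z ^ (k + p) * (starRingEnd ℂ z) ^ j)) dA :=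
      (intg (k + p) j).const_mul _
    have I2 : Integrable (fun z : ℂ => (starRingEnd ℂ δ) * (z ^ (k + q) * (starRingEnd ℂ z) ^ j)) dA :=
      (intg (k + q) j).const_mul _
    have I3 : Integrable (fun z : ℂ => (starRingEnd ℂ α) * (z ^ k * (starRingEnd ℂ z) ^ (n + j))) dA :=
      (intg k (n + j)).const_mul _
    have I4 : Integrable (fun z : ℂ => (starRingEnd ℂ β) * (z ^ k * (starRingEnd ℂ z) ^ (m + j))) dA :=
      (intg k (m + j)).const_mul _
    have I34 : Integrable (fun z : ℂ => (starRingEnd ℂ α) * (z ^ k * (starRingEnd ℂ z) ^ (n + j))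
        + (starRingEnd ℂ β) * (z ^ k * (starRingEnd ℂ z) ^ (m + j))) dA := I3.add I4
    have I234 : Integrable (fun z : ℂ => (starRingEnd ℂ δ) * (z ^ (k + q) * (starRingEnd ℂ z) ^ j)
        + ((starRingEnd ℂ α) * (z ^ k * (starRingEnd ℂ z) ^ (n + j))
          + (starRingEnd ℂ β) * (z ^ k * (starRingEnd ℂ z) ^ (m + j)))) dA := I2.add I34
    rw [hfun, integral_add I1 I234, integral_add I2 I34, integral_add I3 I4,
      integral_const_mul, integral_const_mul, integral_const_mul, integral_const_mul,
      dAInt, dAInt, dAInt, dAInt]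
    norm_cast
  -- the first sum has finite support
  have h1 : (∑' j : ℕ, ((j : ℝ) + 1)
        * ‖∫ z : ℂ, φ z * z ^ k * (starRingEnd ℂ (z ^ j)) ∂dA‖ ^ 2)
      = ∑ j ∈ ({k + n, k + m, k - p, k - q} : Finset ℕ), ((j : ℝ) + 1)
        * ‖∫ z : ℂ, φ z * z ^ k * (starRingEnd ℂ (z ^ j)) ∂dA‖ ^ 2 := by
    apply tsum_eq_sum
    intro j hj
    simp only [Finset.mem_insert, Finset.mem_singleton, not_or] at hj
    rw [key1 j, if_neg (by omega), if_neg (by omega), if_neg (by omega), if_neg (by omega)]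
    simp
  have h2 : (∑' j : ℕ, ((j : ℝ) + 1)
        * ‖∫ z : ℂ, (starRingEnd ℂ (φ z)) * z ^ k
            * (starRingEnd ℂ (z ^ j)) ∂dA‖ ^ 2)
      = ∑ j ∈ ({k + p, k + q, k - n, k - m} : Finset ℕ), ((j : ℝ) + 1)
        * ‖∫ z : ℂ, (starRingEnd ℂ (φ z)) * z ^ k
            * (starRingEnd ℂ (z ^ j)) ∂dA‖ ^ 2 := by
    apply tsum_eq_sum
    intro j hj
    simp only [Finset.mem_insert, Finset.mem_singleton, not_or] at hj
    rw [key2 j, if_neg (by omega), if_neg (by omega), if_neg (by omega), if_neg (by omega)]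
    simp
  rw [h1, h2]
  have hd1 : (k + n) ∉ ({k + m, k - p, k - q} : Finset ℕ) := by
    simp only [Finset.mem_insert, Finset.mem_singleton]; omega
  have hd2 : (k + m) ∉ ({k - p, k - q} : Finset ℕ) := by
    simp only [Finset.mem_insert, Finset.mem_singleton]; omega
  have hd3 : (k - p) ∉ ({k - q} : Finset ℕ) := by
    simp only [Finset.mem_singleton]; omega
  have he1 : (k + p) ∉ ({k + q, k - n, k - m} : Finset ℕ) := by
    simp only [Finset.mem_insert, Finset.mem_singleton]; omega
  have he2 : (k + q) ∉ ({k - n, k - m} : Finset ℕ) := by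
    simp only [Finset.mem_insert, Finset.mem_singleton]; omega
  have he3 : (k - n) ∉ ({k - m} : Finset ℕ) := by
    simp only [Finset.mem_singleton]; omega
  rw [Finset.sum_insert hd1, Finset.sum_insert hd2, Finset.sum_insert hd3, Finset.sum_singleton,
    Finset.sum_insert he1, Finset.sum_insert he2, Finset.sum_insert he3, Finset.sum_singleton]
  -- evaluate each of the eight terms
  have t1 : (((k + n : ℕ) : ℝ) + 1)
      * ‖∫ z : ℂ, φ z * z ^ k * (starRingEnd ℂ (z ^ (k + n))) ∂dA‖ ^ 2
      = ‖α‖ ^ 2 / ((k : ℝ) + n + 1) := by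
    rw [key1, if_pos rfl, if_neg (by omega), if_neg (by omega), if_neg (by omega)]
    simp only [mul_zero, add_zero, zero_add, norm_mul, norm_div, norm_one, Complex.norm_real, Real.norm_eq_abs]
    rw [_root_.abs_of_nonneg (by positivity)]
    push_cast
    have hne : ((k : ℝ) + n + 1) ≠ 0 := by positivity
    field_simp
    try ring
  have t2 : (((k + m : ℕ) : ℝ) + 1)
      * ‖∫ z : ℂ, φ z * z ^ k * (starRingEnd ℂ (z ^ (k + m))) ∂dA‖ ^ 2
      = ‖β‖ ^ 2 / ((k : ℝ) + m + 1) := by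
    rw [key1, if_neg (by omega), if_pos rfl, if_neg (by omega), if_neg (by omega)]
    simp only [mul_zero, add_zero, zero_add, norm_mul, norm_div, norm_one, Complex.norm_real, Real.norm_eq_abs]
    rw [_root_.abs_of_nonneg (by positivity)]
    push_cast
    have hne : ((k : ℝ) + m + 1) ≠ 0 := by positivity
    field_simp
    try ring
  have t3 : (((k - p : ℕ) : ℝ) + 1)
      * ‖∫ z : ℂ, φ z * z ^ k * (starRingEnd ℂ (z ^ (k - p))) ∂dA‖ ^ 2
      = ((k : ℝ) - p + 1) * ‖γ‖ ^ 2 / ((k : ℝ) + 1) ^ 2 := by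
    rw [key1, if_neg (by omega), if_neg (by omega), if_pos (by omega), if_neg (by omega)]
    simp only [mul_zero, add_zero, zero_add, norm_mul, norm_div, norm_one, Complex.norm_real, Real.norm_eq_abs]
    rw [_root_.abs_of_nonneg (by positivity), Nat.cast_sub hpk]
    have hne : ((k : ℝ) + 1) ≠ 0 := by positivity
    field_simp
    try ring
  have t4 : (((k - q : ℕ) : ℝ) + 1)
      * ‖∫ z : ℂ, φ z * z ^ k * (starRingEnd ℂ (z ^ (k - q))) ∂dA‖ ^ 2
      = ((k : ℝ) - q + 1) * ‖δ‖ ^ 2 / ((k : ℝ) + 1) ^ 2 := by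
    rw [key1, if_neg (by omega), if_neg (by omega), if_neg (by omega), if_pos (by omega)]
    simp only [mul_zero, add_zero, zero_add, norm_mul, norm_div, norm_one, Complex.norm_real, Real.norm_eq_abs]
    rw [_root_.abs_of_nonneg (by positivity), Nat.cast_sub hqk]
    have hne : ((k : ℝ) + 1) ≠ 0 := by positivity
    field_simp
    try ring
  have u1 : (((k + p : ℕ) : ℝ) + 1)
      * ‖∫ z : ℂ, (starRingEnd ℂ (φ z)) * z ^ k
          * (starRingEnd ℂ (z ^ (k + p))) ∂dA‖ ^ 2
      = ‖γ‖ ^ 2 / ((k : ℝ) + p + 1) := by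
    rw [key2, if_pos rfl, if_neg (by omega), if_neg (by omega), if_neg (by omega)]
    simp only [mul_zero, add_zero, zero_add, norm_mul, norm_div, norm_one, Complex.norm_real, Real.norm_eq_abs, Complex.norm_conj]
    rw [_root_.abs_of_nonneg (by positivity)]
    push_cast
    have hne : ((k : ℝ) + p + 1) ≠ 0 := by positivity
    field_simp
    try ring
  have u2 : (((k + q : ℕ) : ℝ) + 1)
      * ‖∫ z : ℂ, (starRingEnd ℂ (φ z)) * z ^ k
          * (starRingEnd ℂ (z ^ (k + q))) ∂dA‖ ^ 2
      = ‖δ‖ ^ 2 / ((k : ℝ) + q + 1) := by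
    rw [key2, if_neg (by omega), if_pos rfl, if_neg (by omega), if_neg (by omega)]
    simp only [mul_zero, add_zero, zero_add, norm_mul, norm_div, norm_one, Complex.norm_real, Real.norm_eq_abs, Complex.norm_conj]
    rw [_root_.abs_of_nonneg (by positivity)]
    push_cast
    have hne : ((k : ℝ) + q + 1) ≠ 0 := by positivity
    field_simp
    try ring
  have u3 : (((k - n : ℕ) : ℝ) + 1)
      * ‖∫ z : ℂ, (starRingEnd ℂ (φ z)) * z ^ k
          * (starRingEnd ℂ (z ^ (k - n))) ∂dA‖ ^ 2
      = ((k : ℝ) - n + 1) * ‖α‖ ^ 2 / ((k : ℝ) + 1) ^ 2 := by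
    rw [key2, if_neg (by omega), if_neg (by omega), if_pos (by omega), if_neg (by omega)]
    simp only [mul_zero, add_zero, zero_add, norm_mul, norm_div, norm_one, Complex.norm_real, Real.norm_eq_abs, Complex.norm_conj]
    rw [_root_.abs_of_nonneg (by positivity), Nat.cast_sub hnk]
    have hne : ((k : ℝ) + 1) ≠ 0 := by positivity
    field_simp
    try ring
  have u4 : (((k - m : ℕ) : ℝ) + 1)
      * ‖∫ z : ℂ, (starRingEnd ℂ (φ z)) * z ^ k
          * (starRingEnd ℂ (z ^ (k - m))) ∂dA‖ ^ 2
      = ((k : ℝ) - m + 1) * ‖β‖ ^ 2 / ((k : ℝ) + 1) ^ 2 := by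
    rw [key2, if_neg (by omega), if_neg (by omega), if_neg (by omega), if_pos (by omega)]
    simp only [mul_zero, add_zero, zero_add, norm_mul, norm_div, norm_one, Complex.norm_real, Real.norm_eq_abs, Complex.norm_conj]
    rw [_root_.abs_of_nonneg (by positivity), Nat.cast_sub hmk]
    have hne : ((k : ℝ) + 1) ≠ 0 := by positivity
    field_simp
    try ring
  rw [t1, t2, t3, t4, u1, u2, u3, u4]
  have hK : (0:ℝ) < (k : ℝ) + 1 := by positivity
  have hKN : (0:ℝ) < (k : ℝ) + n + 1 := by positivity
  have hKM : (0:ℝ) < (k : ℝ) + m + 1 := by positivity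
  have hKP : (0:ℝ) < (k : ℝ) + p + 1 := by positivity
  have hKQ : (0:ℝ) < (k : ℝ) + q + 1 := by positivity
  field_simp
  ring
end

section
/- Let a ∈ ℝ and ρ ∈ ℂ, and let Q be the bounded linear operator on ℓ²(ℕ, ℂ) given by (Qx)₀ = a·x₀ + ρ·x₁ and (Qx)_j = conj(ρ)·x_{j−1} + a·x_j + ρ·x_{j+1} for j ≥ 1. If Q is positive, i.e. ⟨Qx, x⟩ is a nonnegative real number for every x ∈ ℓ²(ℕ, ℂ), then a ≥ 2|ρ|. -/
open Complex

/-- If the infinite tridiagonal Toeplitz matrix with diagonal `a`, superdiagonal `ρ`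
and subdiagonal `conj ρ` is a positive operator on ℓ²(ℕ, ℂ), then a ≥ 2|ρ|. -/
theorem statement9 (a : ℝ) (ρ : ℂ)
    (Q : lp (fun _ : ℕ => ℂ) 2 →L[ℂ] lp (fun _ : ℕ => ℂ) 2)
    (hQ0 : ∀ x : lp (fun _ : ℕ => ℂ) 2, (Q x : ∀ _ : ℕ, ℂ) 0
        = (a : ℂ) * (x : ∀ _ : ℕ, ℂ) 0 + ρ * (x : ∀ _ : ℕ, ℂ) 1)
    (hQ : ∀ x : lp (fun _ : ℕ => ℂ) 2, ∀ j : ℕ, 1 ≤ j →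
        (Q x : ∀ _ : ℕ, ℂ) j
          = (starRingEnd ℂ ρ) * (x : ∀ _ : ℕ, ℂ) (j - 1)
            + (a : ℂ) * (x : ∀ _ : ℕ, ℂ) j + ρ * (x : ∀ _ : ℕ, ℂ) (j + 1))
    (hpos : ∀ x : lp (fun _ : ℕ => ℂ) 2,
        0 ≤ (inner ℂ (Q x) x : ℂ).re ∧ (inner ℂ (Q x) x : ℂ).im = 0) :
    2 * ‖ρ‖ ≤ a := by
  set r : ℝ := ‖ρ‖ with hr
  set u : ℂ := if ρ = 0 then 1 else -(starRingEnd ℂ ρ) / r with hudef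
  have hru : ρ * u = -(r : ℂ) := by
    by_cases h : ρ = 0
    · simp [hudef, h, hr]
    · have hr0 : (r : ℝ) ≠ 0 := by simpa [hr] using (norm_ne_zero_iff.mpr h)
      have hr0' : (r : ℂ) ≠ 0 := by exact_mod_cast hr0
      rw [hudef, if_neg h]
      have : ρ * starRingEnd ℂ ρ = ((r : ℂ)) ^ 2 := by
        rw [Complex.mul_conj, Complex.normSq_eq_norm_sq]
        push_cast
        ring
      field_simp
      rw [this]
  have hcu : starRingEnd ℂ u * u = 1 := by
    by_cases h : ρ = 0
    · simp [hudef, h]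
    · have hr0 : (r : ℝ) ≠ 0 := by simpa [hr] using (norm_ne_zero_iff.mpr h)
      have hr0' : (r : ℂ) ≠ 0 := by exact_mod_cast hr0
      rw [hudef, if_neg h]
      have hc : starRingEnd ℂ (-(starRingEnd ℂ ρ) / r) = -ρ / r := by
        simp [map_div₀, Complex.conj_conj, Complex.conj_ofReal]
      rw [hc]
      have : ρ * starRingEnd ℂ ρ = ((r : ℂ)) ^ 2 := by
        rw [Complex.mul_conj, Complex.normSq_eq_norm_sq]
        push_cast
        ring
      field_simp
      rw [this]
  have hpow : ∀ k : ℕ, (starRingEnd ℂ u) ^ k * u ^ k = 1 := by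
    intro k
    rw [← mul_pow, hcu, one_pow]
  have key : ∀ n : ℕ, 2 ≤ n → 0 ≤ (n : ℝ) * a - 2 * ((n : ℝ) - 1) * r := by
    intro n hn
    set x : lp (fun _ : ℕ => ℂ) 2 := ∑ j ∈ Finset.range n, lp.single 2 j (u ^ j) with hx
    have hxc : ∀ i : ℕ, (x : ∀ _ : ℕ, ℂ) i = if i < n then u ^ i else 0 := by
      intro i
      rw [hx, lp.coeFn_sum, Finset.sum_apply]
      rw [show (∑ j ∈ Finset.range n, lp.single 2 j (u ^ j : ℂ) i)
          = ∑ j ∈ Finset.range n, if i = j then u ^ j else 0 from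
        Finset.sum_congr rfl fun j _ => by
          rw [lp.single_apply]
          by_cases hij : i = j
          · subst hij; simp
          · simp [hij]]
      simp [Finset.sum_ite_eq, Finset.mem_range]
    have hxj : ∀ i : ℕ, i < n → (x : ∀ _ : ℕ, ℂ) i = u ^ i := fun i hi => by
      rw [hxc i, if_pos hi]
    have hxj' : ∀ i : ℕ, n ≤ i → (x : ∀ _ : ℕ, ℂ) i = 0 := fun i hi => by
      rw [hxc i, if_neg (by omega)]
    have hinner : (inner ℂ (Q x) x : ℂ)
        = ∑ j ∈ Finset.range n, starRingEnd ℂ ((Q x : ∀ _ : ℕ, ℂ) j) * u ^ j := by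
      rw [lp.inner_eq_tsum]
      rw [tsum_eq_sum (s := Finset.range n) (fun b hb => by
        rw [RCLike.inner_apply, hxj' b (by simpa [Finset.mem_range, not_lt] using hb), zero_mul])]
      exact Finset.sum_congr rfl fun j hj => by
        rw [RCLike.inner_apply, hxj j (Finset.mem_range.mp hj), mul_comm]
    have hterm : ∀ j ∈ Finset.range n,
        starRingEnd ℂ ((Q x : ∀ _ : ℕ, ℂ) j) * u ^ j
          = ((a : ℂ) - 2 * r) + (if j = 0 then (r : ℂ) else 0)
            + (if j = n - 1 then (r : ℂ) else 0) := by
      intro j hj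
      rw [Finset.mem_range] at hj
      rcases Nat.eq_zero_or_pos j with h0 | h1
      · subst h0
        rw [hQ0 x, hxj 0 (by omega), hxj 1 (by omega)]
        have : starRingEnd ℂ ((a : ℂ) * u ^ 0 + ρ * u ^ 1) * u ^ 0
            = (a : ℂ) + starRingEnd ℂ (ρ * u) := by
          simp [map_add, map_mul, Complex.conj_ofReal]
        rw [this, hru]
        have hne : (0 : ℕ) ≠ n - 1 := by omega
        simp [hne, Complex.conj_ofReal]
        ring
      · obtain ⟨k, rfl⟩ : ∃ k, j = k + 1 := ⟨j - 1, by omega⟩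
        rw [hQ x (k + 1) (by omega)]
        simp only [Nat.add_sub_cancel]
        by_cases hlast : k + 1 = n - 1
        · -- last index: x (k+2) = 0
          rw [hxj k (by omega), hxj (k + 1) (by omega), hxj' (k + 1 + 1) (by omega)]
          rw [mul_zero, add_zero, map_add, map_mul, map_mul, Complex.conj_conj,
            Complex.conj_ofReal]
          rw [add_mul, mul_assoc, mul_assoc]
          have e1 : starRingEnd ℂ (u ^ k) * u ^ (k + 1) = u := by
            rw [map_pow, pow_succ, ← mul_assoc, hpow k, one_mul]
          have e2 : starRingEnd ℂ (u ^ (k + 1)) * u ^ (k + 1) = 1 := by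
            rw [map_pow]; exact hpow (k + 1)
          rw [e1, e2, hru, mul_one]
          have hne0 : ¬ (k + 1 = 0) := by omega
          have hne1 : ¬ (n - 1 = 0) := by omega
          simp [hne0, hlast, hne1]
          ring
        · -- interior index
          rw [hxj k (by omega), hxj (k + 1) (by omega), hxj (k + 1 + 1) (by omega)]
          rw [map_add, map_add, map_mul, map_mul, map_mul, Complex.conj_conj,
            Complex.conj_ofReal]
          rw [add_mul, add_mul, mul_assoc, mul_assoc, mul_assoc]
          have e1 : starRingEnd ℂ (u ^ k) * u ^ (k + 1) = u := by
            rw [map_pow, pow_succ, ← mul_assoc, hpow k, one_mul]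
          have e2 : starRingEnd ℂ (u ^ (k + 1)) * u ^ (k + 1) = 1 := by
            rw [map_pow]; exact hpow (k + 1)
          have e3 : starRingEnd ℂ (u ^ (k + 1 + 1)) * u ^ (k + 1) = starRingEnd ℂ u := by
            rw [map_pow, pow_succ, mul_right_comm, hpow (k + 1), one_mul]
          rw [e1, e2, e3, hru, mul_one]
          have e4 : starRingEnd ℂ ρ * starRingEnd ℂ u = -(r : ℂ) := by
            rw [← map_mul, hru, map_neg, Complex.conj_ofReal]
          rw [e4]
          have hne0 : ¬ (k + 1 = 0) := by omega
          simp [hne0, hlast, Complex.conj_ofReal]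
          ring
    have hsum : (inner ℂ (Q x) x : ℂ)
        = (n : ℂ) * ((a : ℂ) - 2 * r) + r + r := by
      rw [hinner, Finset.sum_congr rfl hterm]
      rw [Finset.sum_add_distrib, Finset.sum_add_distrib, Finset.sum_const,
        Finset.sum_ite_eq' (Finset.range n) 0 (fun _ => (r : ℂ)),
        Finset.sum_ite_eq' (Finset.range n) (n - 1) (fun _ => (r : ℂ))]
      have h0 : (0 : ℕ) ∈ Finset.range n := by simp; omega
      have h1 : n - 1 ∈ Finset.range n := by simp [Finset.mem_range]; omega
      rw [if_pos h0, if_pos h1]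
      simp [nsmul_eq_mul]
    have := (hpos x).1
    rw [hsum] at this
    simp only [Complex.add_re, Complex.mul_re, Complex.natCast_re, Complex.natCast_im,
      Complex.sub_re, Complex.ofReal_re, Complex.mul_re, Complex.ofReal_im,
      Complex.sub_im, Complex.mul_im, Complex.re_ofNat, Complex.im_ofNat] at this
    push_cast at this ⊢
    nlinarith [this]
  by_contra hcon
  push_neg at hcon
  set ε : ℝ := 2 * r - a with hε
  have hεpos : 0 < ε := by simp [hε]; linarith
  obtain ⟨m, hm⟩ := exists_nat_gt (2 * r / ε)
  have hkey := key (m + 2) (by omega)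
  have hn2 : (2 : ℝ) ≤ (m + 2 : ℕ) := by push_cast; linarith [Nat.cast_nonneg (α := ℝ) m]
  have : ((m + 2 : ℕ) : ℝ) * ε ≤ 2 * r := by push_cast at hkey ⊢; nlinarith
  have h2 : 2 * r / ε < ((m + 2 : ℕ) : ℝ) := by push_cast; push_cast at hm; linarith
  rw [div_lt_iff₀ hεpos] at h2
  linarith
end

section
/- Let α ∈ ℂ. The following are equivalent: (i) for every sequence (b_n)_{n≥0} of complex numbers with Σ_{n=0}^∞ |b_n|²/(n+1) < ∞, one has |α|²·Σ_{n=0}^∞ |b_n|²/(n+2) + Σ_{n=2}^∞ |b_n|²·(n−1)/(n+1)² ≥ |α|²·Σ_{n=1}^∞ |b_n|²·n/(n+1)² + Σ_{n=0}^∞ |b_n|²/(n+3); (ii) |α| ≥ 2. (Condition (i) is exactly the hyponormality of the Toeplitz operator T_{z̄² + αz} on the Bergman space A²(𝔻), where f = Σ b_n z^n ∈ A²(𝔻); in particular T_{z̄² + 2z} is hyponormal on A²(𝔻).) -/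
open Complex

private lemma key1 (t x m : ℝ) (ht : 4 ≤ t) (hx : 0 ≤ x) (hm : 0 ≤ m) :
    t * (x * (m+2) / (m+3)^2) + x / (m+5) ≤ t * (x / (m+4)) + x * (m+1) / (m+3)^2 := by
  have h3 : (0:ℝ) < (m+3)^2 := by positivity
  have h4 : (0:ℝ) < m+4 := by linarith
  have h5 : (0:ℝ) < m+5 := by linarith
  rw [← mul_div_assoc, ← mul_div_assoc,
    div_add_div _ _ (ne_of_gt h3) (ne_of_gt h5), div_add_div _ _ (ne_of_gt h4) (ne_of_gt h3),
    div_le_div_iff₀ (by positivity) (by positivity)]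
  nlinarith [mul_nonneg (mul_nonneg (sub_nonneg.2 ht) hx) hm,
    mul_nonneg (sub_nonneg.2 ht) hx, mul_nonneg hx hm, sq_nonneg m,
    mul_nonneg (mul_nonneg (mul_nonneg (sub_nonneg.2 ht) hx) hm) hm,
    mul_nonneg (mul_nonneg hx hm) hm]

private lemma key2 (t m : ℝ) (hm : 0 ≤ m)
    (h : t * ((m+2) / (m+3)^2) + 1 / (m+5) ≤ t * (1 / (m+4)) + (m+1) / (m+3)^2) :
    4 * (m+4) ≤ t * (m+5) := by
  have h3 : (0:ℝ) < (m+3)^2 := by positivity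
  have h4 : (0:ℝ) < m+4 := by linarith
  have h5 : (0:ℝ) < m+5 := by linarith
  rw [← mul_div_assoc, ← mul_div_assoc,
    div_add_div _ _ (ne_of_gt h3) (ne_of_gt h5), div_add_div _ _ (ne_of_gt h4) (ne_of_gt h3),
    div_le_div_iff₀ (by positivity) (by positivity)] at h
  nlinarith [h3, sq_nonneg (m+3), mul_pos h3 h4, mul_pos h3 h5]

/-- Hyponormality of T_{z̄² + αz} on the Bergman space, expressed through the
coefficient inequality, holds if and only if |α| ≥ 2. -/
theorem statement13 (α : ℂ) :
    (∀ b : ℕ → ℂ, Summable (fun n : ℕ => ‖b n‖ ^ 2 / ((n : ℝ) + 1)) →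
      ‖α‖ ^ 2 * (∑' n : ℕ, ‖b n‖ ^ 2 * (n : ℝ) / ((n : ℝ) + 1) ^ 2)
          + (∑' n : ℕ, ‖b n‖ ^ 2 / ((n : ℝ) + 3))
        ≤ ‖α‖ ^ 2 * (∑' n : ℕ, ‖b n‖ ^ 2 / ((n : ℝ) + 2))
          + ∑' n : ℕ, ‖b (n + 2)‖ ^ 2 * ((n : ℝ) + 1) / ((n : ℝ) + 3) ^ 2)
    ↔ 2 ≤ ‖α‖ := by
  set t : ℝ := ‖α‖ ^ 2 with hts
  constructor
  · intro H
    -- test with indicator sequences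
    have key : ∀ m : ℕ, 4 * ((m:ℝ) + 4) ≤ t * ((m:ℝ) + 5) := by
      intro m
      set b : ℕ → ℂ := fun k => if k = m + 2 then 1 else 0 with hb
      have hzero : ∀ n : ℕ, n ≠ m + 2 → ‖b n‖ ^ 2 = 0 := by
        intro n hn; simp [hb, hn]
      have hone : ‖b (m+2)‖ ^ 2 = 1 := by simp [hb]
      have hsum : Summable (fun n : ℕ => ‖b n‖ ^ 2 / ((n : ℝ) + 1)) := by
        apply summable_of_ne_finset_zero (s := {m+2})
        intro n hn
        rw [hzero n (by simpa using hn)]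
        simp
      have H1 := H b hsum
      have e1 : (∑' n : ℕ, ‖b n‖ ^ 2 * (n : ℝ) / ((n : ℝ) + 1) ^ 2)
          = ((m:ℝ)+2) / ((m:ℝ)+3)^2 := by
        rw [tsum_eq_single (m+2) (by intro n hn; rw [hzero n hn]; simp)]
        rw [hone]; push_cast; ring
      have e2 : (∑' n : ℕ, ‖b n‖ ^ 2 / ((n : ℝ) + 3)) = 1 / ((m:ℝ)+5) := by
        rw [tsum_eq_single (m+2) (by intro n hn; rw [hzero n hn]; simp)]
        rw [hone]; push_cast; ring
      have e3 : (∑' n : ℕ, ‖b n‖ ^ 2 / ((n : ℝ) + 2)) = 1 / ((m:ℝ)+4) := by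
        rw [tsum_eq_single (m+2) (by intro n hn; rw [hzero n hn]; simp)]
        rw [hone]; push_cast; ring
      have e4 : (∑' n : ℕ, ‖b (n + 2)‖ ^ 2 * ((n : ℝ) + 1) / ((n : ℝ) + 3) ^ 2)
          = ((m:ℝ)+1) / ((m:ℝ)+3)^2 := by
        rw [tsum_eq_single m (by
          intro n hn
          rw [hzero (n+2) (by omega)]; simp)]
        rw [hone]; ring
      rw [e1, e2, e3, e4] at H1
      exact key2 t m (Nat.cast_nonneg m) H1
    have ht4 : (4:ℝ) ≤ t := by
      by_contra hlt
      push_neg at hlt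
      obtain ⟨m, hm⟩ := exists_nat_gt (4 / (4 - t))
      have h4t : (0:ℝ) < 4 - t := by linarith
      have := key m
      have hm' : 4 / (4 - t) < (m:ℝ) := hm
      rw [div_lt_iff₀ h4t] at hm'
      nlinarith [Nat.cast_nonneg (α := ℝ) m]
    nlinarith [norm_nonneg α]
  · intro hα b hb
    have ht4 : (4:ℝ) ≤ t := by nlinarith
    set a : ℕ → ℝ := fun n => ‖b n‖ ^ 2 with ha
    have hann : ∀ n, 0 ≤ a n := fun n => by positivity
    have hb' : Summable (fun n : ℕ => a n / ((n : ℝ) + 1)) := hb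
    -- summability of all pieces
    have hS1 : Summable (fun n : ℕ => a n * (n : ℝ) / ((n : ℝ) + 1) ^ 2) := by
      apply Summable.of_nonneg_of_le (fun n => by positivity) _ hb'
      intro n
      rw [div_le_div_iff₀ (by positivity) (by positivity)]
      nlinarith [hann n, Nat.cast_nonneg (α := ℝ) n, sq_nonneg ((n:ℝ)+1)]
    have hS2 : Summable (fun n : ℕ => a n / ((n : ℝ) + 3)) := by
      apply Summable.of_nonneg_of_le (fun n => by positivity) _ hb'
      intro n
      rw [div_le_div_iff₀ (by positivity) (by positivity)]
      nlinarith [hann n, Nat.cast_nonneg (α := ℝ) n]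
    have hS3 : Summable (fun n : ℕ => a n / ((n : ℝ) + 2)) := by
      apply Summable.of_nonneg_of_le (fun n => by positivity) _ hb'
      intro n
      rw [div_le_div_iff₀ (by positivity) (by positivity)]
      nlinarith [hann n, Nat.cast_nonneg (α := ℝ) n]
    have hshift : Summable (fun n : ℕ => a (n+2) / ((n : ℝ) + 3)) := by
      have := (summable_nat_add_iff 2).mpr hb'
      apply this.congr
      intro n; push_cast; ring_nf
    have hS4 : Summable (fun n : ℕ => a (n+2) * ((n : ℝ) + 1) / ((n : ℝ) + 3) ^ 2) := by
      apply Summable.of_nonneg_of_le (fun n => by positivity) _ hshift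
      intro n
      rw [div_le_div_iff₀ (by positivity) (by positivity)]
      nlinarith [hann (n+2), Nat.cast_nonneg (α := ℝ) n]
    -- shifted versions
    have hT1 : Summable (fun n : ℕ => a (n+2) * ((n : ℝ) + 2) / ((n : ℝ) + 3) ^ 2) := by
      have := (summable_nat_add_iff 2).mpr hS1
      apply this.congr; intro n; push_cast; ring_nf
    have hT2 : Summable (fun n : ℕ => a (n+2) / ((n : ℝ) + 5)) := by
      have := (summable_nat_add_iff 2).mpr hS2
      apply this.congr; intro n; push_cast; ring_nf
    have hT3 : Summable (fun n : ℕ => a (n+2) / ((n : ℝ) + 4)) := by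
      have := (summable_nat_add_iff 2).mpr hS3
      apply this.congr; intro n; push_cast; ring_nf
    -- decompose the three left-hand series into head + tail
    have e1 : (∑' n : ℕ, a n * (n : ℝ) / ((n : ℝ) + 1) ^ 2)
        = a 1 / 4 + ∑' n : ℕ, a (n+2) * ((n : ℝ) + 2) / ((n : ℝ) + 3) ^ 2 := by
      rw [← Summable.sum_add_tsum_nat_add 2 hS1]
      congr 1
      · simp [Finset.sum_range_succ]; norm_num
      · apply tsum_congr; intro n; push_cast; ring_nf
    have e2 : (∑' n : ℕ, a n / ((n : ℝ) + 3))
        = a 0 / 3 + a 1 / 4 + ∑' n : ℕ, a (n+2) / ((n : ℝ) + 5) := by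
      rw [← Summable.sum_add_tsum_nat_add 2 hS2]
      congr 1
      · simp [Finset.sum_range_succ]; norm_num
      · apply tsum_congr; intro n; push_cast; ring_nf
    have e3 : (∑' n : ℕ, a n / ((n : ℝ) + 2))
        = a 0 / 2 + a 1 / 3 + ∑' n : ℕ, a (n+2) / ((n : ℝ) + 4) := by
      rw [← Summable.sum_add_tsum_nat_add 2 hS3]
      congr 1
      · simp [Finset.sum_range_succ]; norm_num
      · apply tsum_congr; intro n; push_cast; ring_nf
    -- main tail inequality
    have hmain : t * (∑' n : ℕ, a (n+2) * ((n : ℝ) + 2) / ((n : ℝ) + 3) ^ 2)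
          + (∑' n : ℕ, a (n+2) / ((n : ℝ) + 5))
        ≤ t * (∑' n : ℕ, a (n+2) / ((n : ℝ) + 4))
          + ∑' n : ℕ, a (n+2) * ((n : ℝ) + 1) / ((n : ℝ) + 3) ^ 2 := by
      rw [← tsum_mul_left, ← tsum_mul_left,
        ← Summable.tsum_add (hT1.mul_left t) hT2, ← Summable.tsum_add (hT3.mul_left t) hS4]
      apply Summable.tsum_le_tsum _ ((hT1.mul_left t).add hT2) ((hT3.mul_left t).add hS4)
      intro n
      have := key1 t (a (n+2)) (n:ℝ) ht4 (hann (n+2)) (Nat.cast_nonneg n)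
      calc t * (a (n+2) * ((n:ℝ)+2) / ((n:ℝ)+3)^2) + a (n+2) / ((n:ℝ)+5)
          ≤ t * (a (n+2) / ((n:ℝ)+4)) + a (n+2) * ((n:ℝ)+1) / ((n:ℝ)+3)^2 := this
        _ = _ := by ring
    show t * (∑' n : ℕ, a n * (n : ℝ) / ((n : ℝ) + 1) ^ 2)
          + (∑' n : ℕ, a n / ((n : ℝ) + 3))
        ≤ t * (∑' n : ℕ, a n / ((n : ℝ) + 2))
          + ∑' n : ℕ, a (n + 2) * ((n : ℝ) + 1) / ((n : ℝ) + 3) ^ 2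
    rw [e1, e2, e3]
    nlinarith [hann 0, hann 1, mul_nonneg (sub_nonneg.2 ht4) (hann 0),
      mul_nonneg (sub_nonneg.2 ht4) (hann 1), hmain]
end

section
/- Let f, g be holomorphic functions on the open unit disk 𝔻 ⊆ ℂ and let a, b ∈ ℂ. If the function z ↦ a·( f(z) + conj(g(z)) ) + b·conj( f(z) + conj(g(z)) ) is constant on 𝔻, then (|a|² − |b|²)·f′(z) = 0 for every z ∈ 𝔻; in particular, if |a| ≠ |b| then f is constant on 𝔻. -/
open Complex Metric

/-- If a(f + ḡ) + b·conj(f + ḡ) is constant on the unit disk, with f, g holomorphic,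
then (|a|² - |b|²) f' = 0 on the disk; in particular if |a| ≠ |b| then f is constant. -/
theorem statement14 (f g : ℂ → ℂ) (a b : ℂ)
    (hf : DifferentiableOn ℂ f (ball (0 : ℂ) 1))
    (hg : DifferentiableOn ℂ g (ball (0 : ℂ) 1))
    (hconst : ∃ C : ℂ, ∀ z ∈ ball (0 : ℂ) 1,
      a * (f z + starRingEnd ℂ (g z)) + b * starRingEnd ℂ (f z + starRingEnd ℂ (g z)) = C) :
    (∀ z ∈ ball (0 : ℂ) 1,
      ((‖a‖ ^ 2 - ‖b‖ ^ 2 : ℝ) : ℂ) * deriv f z = 0)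
    ∧ (‖a‖ ≠ ‖b‖ →
      ∀ z ∈ ball (0 : ℂ) 1, ∀ w ∈ ball (0 : ℂ) 1, f z = f w) := by
  obtain ⟨C, hC⟩ := hconst
  have hball : IsOpen (ball (0:ℂ) 1) := isOpen_ball
  have key : ∀ z ∈ ball (0:ℂ) 1,
      a * deriv f z + b * deriv g z = 0 ∧
      (starRingEnd ℂ b) * deriv f z + (starRingEnd ℂ a) * deriv g z = 0 := by
    intro z hz
    have hfz : DifferentiableAt ℂ f z := (hf z hz).differentiableAt (hball.mem_nhds hz)
    have hgz : DifferentiableAt ℂ g z := (hg z hz).differentiableAt (hball.mem_nhds hz)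
    set F' := a * deriv f z + b * deriv g z with hF'def
    set G' := (starRingEnd ℂ b) * deriv f z + (starRingEnd ℂ a) * deriv g z with hG'def
    have hF : HasDerivAt (fun w => a * f w + b * g w) F' z :=
      ((hfz.hasDerivAt.const_mul a).add (hgz.hasDerivAt.const_mul b))
    have hG : HasDerivAt (fun w => (starRingEnd ℂ b) * f w + (starRingEnd ℂ a) * g w) G' z :=
      ((hfz.hasDerivAt.const_mul (starRingEnd ℂ b)).add (hgz.hasDerivAt.const_mul (starRingEnd ℂ a)))
    have hconj : HasFDerivAt (fun w => starRingEnd ℂ ((starRingEnd ℂ b) * f w + (starRingEnd ℂ a) * g w))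
        ((Complex.conjCLE : ℂ →L[ℝ] ℂ).comp
          (((1 : ℂ →L[ℂ] ℂ).smulRight G').restrictScalars ℝ)) z :=
      (Complex.conjCLE.toContinuousLinearMap.hasFDerivAt).comp z
        (hG.hasFDerivAt.restrictScalars ℝ)
    have hH : HasFDerivAt
        (fun w => (a * f w + b * g w) +
          starRingEnd ℂ ((starRingEnd ℂ b) * f w + (starRingEnd ℂ a) * g w))
        ((((1 : ℂ →L[ℂ] ℂ).smulRight F').restrictScalars ℝ) +
          ((Complex.conjCLE : ℂ →L[ℝ] ℂ).comp
            (((1 : ℂ →L[ℂ] ℂ).smulRight G').restrictScalars ℝ))) z := by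
      have hFr : HasFDerivAt (fun w => a * f w + b * g w)
          ((((1 : ℂ →L[ℂ] ℂ).smulRight F').restrictScalars ℝ)) z := by
        exact hF.hasFDerivAt.restrictScalars ℝ
      exact hFr.add hconj
    have heqC : (fun w => (a * f w + b * g w) +
          starRingEnd ℂ ((starRingEnd ℂ b) * f w + (starRingEnd ℂ a) * g w))
        =ᶠ[nhds z] fun _ => C := by
      filter_upwards [hball.mem_nhds hz] with w hw
      rw [← hC w hw]
      simp only [map_add, map_mul, Complex.conj_conj]
      ring
    have hH0 : HasFDerivAt
        (fun w => (a * f w + b * g w) +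
          starRingEnd ℂ ((starRingEnd ℂ b) * f w + (starRingEnd ℂ a) * g w))
        (0 : ℂ →L[ℝ] ℂ) z := by
      exact (hasFDerivAt_const (𝕜 := ℝ) C z).congr_of_eventuallyEq heqC
    have hLeq := hH.unique hH0
    have h1 : F' + starRingEnd ℂ G' = 0 := by
      have := congrArg (fun L => L 1) hLeq
      simpa using this
    have h2 : Complex.I * F' + starRingEnd ℂ (Complex.I * G') = 0 := by
      have := congrArg (fun L => L Complex.I) hLeq
      simpa [smul_eq_mul] using this
    have hFz : F' = 0 := by
      have h2' : Complex.I * F' - Complex.I * starRingEnd ℂ G' = 0 := by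
        rw [map_mul] at h2; simp only [Complex.conj_I] at h2; linear_combination h2
      have h3 : F' - starRingEnd ℂ G' = 0 := by
        have hmul : Complex.I * (F' - starRingEnd ℂ G') = 0 := by linear_combination h2'
        exact (mul_eq_zero.mp hmul).resolve_left Complex.I_ne_zero
      linear_combination (h1 + h3) / 2
    have hGz : G' = 0 := by
      have : starRingEnd ℂ G' = 0 := by linear_combination h1 - hFz
      simpa using congrArg (starRingEnd ℂ) this
    exact ⟨hFz, hGz⟩
  have part1 : ∀ z ∈ ball (0:ℂ) 1,
      ((‖a‖ ^ 2 - ‖b‖ ^ 2 : ℝ) : ℂ) * deriv f z = 0 := by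
    intro z hz
    obtain ⟨h1, h2⟩ := key z hz
    have habs : ((‖a‖ ^ 2 - ‖b‖ ^ 2 : ℝ) : ℂ)
        = starRingEnd ℂ a * a - starRingEnd ℂ b * b := by
      have ha : starRingEnd ℂ a * a = ((‖a‖ ^ 2 : ℝ) : ℂ) := by
        rw [mul_comm, Complex.mul_conj, Complex.normSq_eq_norm_sq]
      have hb : starRingEnd ℂ b * b = ((‖b‖ ^ 2 : ℝ) : ℂ) := by
        rw [mul_comm, Complex.mul_conj, Complex.normSq_eq_norm_sq]
      rw [Complex.ofReal_sub, ha, hb]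
    rw [habs]
    linear_combination (starRingEnd ℂ a) * h1 - b * h2
  refine ⟨part1, fun hab z hz w hw => ?_⟩
  have hne : ((‖a‖ ^ 2 - ‖b‖ ^ 2 : ℝ) : ℂ) ≠ 0 := by
    simp only [ne_eq, Complex.ofReal_eq_zero, sub_eq_zero]
    intro h
    exact hab (by
      rw [← Real.sqrt_sq (norm_nonneg a), ← Real.sqrt_sq (norm_nonneg b), h])
  have hderiv0 : ∀ x ∈ ball (0:ℂ) 1, deriv f x = 0 := fun x hx =>
    (mul_eq_zero.mp (part1 x hx)).resolve_left hne
  have hconv : Convex ℝ (ball (0:ℂ) 1) := convex_ball 0 1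
  have : ∀ x ∈ ball (0:ℂ) 1, fderivWithin ℂ f (ball (0:ℂ) 1) x = 0 := by
    intro x hx
    have hdx : DifferentiableAt ℂ f x := (hf x hx).differentiableAt (hball.mem_nhds hx)
    rw [fderivWithin_of_isOpen hball hx]
    ext1
    simp [fderiv_apply_one_eq_deriv, hderiv0 x hx]
  exact hconv.is_const_of_fderivWithin_eq_zero hf this hz hw
end

section
/- Let f, g be holomorphic functions on the open unit disk 𝔻 ⊆ ℂ, let a, b ∈ ℂ with (a, b) ≠ (0, 0), and set φ := f + conj(g). Assume f is not constant on 𝔻 and that the function z ↦ a·φ(z) + b·conj(φ(z)) is constant on 𝔻. Then |a| = |b| > 0, and, setting λ := b/a, one has |λ| = 1 and the function z ↦ φ(z) + λ·conj(φ(z)) is constant on 𝔻. -/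
open Complex Metric

lemma aux_deriv_zero {G : ℂ → ℂ} {z : ℂ}
    (hG : DifferentiableAt ℂ G z)
    (hE : DifferentiableAt ℂ (fun w => starRingEnd ℂ (G w)) z) :
    deriv G z = 0 := by
  set d := deriv G z with hd
  set e := deriv (fun w => starRingEnd ℂ (G w)) z with he
  have h1 : HasDerivAt G d z := hG.hasDerivAt
  have h2 : HasDerivAt (fun w => starRingEnd ℂ (G w)) e z := hE.hasDerivAt
  have f1 : HasFDerivAt G (ContinuousLinearMap.restrictScalars ℝ
      (ContinuousLinearMap.smulRight (1 : ℂ →L[ℂ] ℂ) d)) z :=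
    h1.hasFDerivAt.restrictScalars ℝ
  have f2 : HasFDerivAt (fun w => starRingEnd ℂ (G w))
      (ContinuousLinearMap.restrictScalars ℝ
      (ContinuousLinearMap.smulRight (1 : ℂ →L[ℂ] ℂ) e)) z :=
    h2.hasFDerivAt.restrictScalars ℝ
  have f3 : HasFDerivAt G
      ((Complex.conjCLE.toContinuousLinearMap).comp
        (ContinuousLinearMap.restrictScalars ℝ
          (ContinuousLinearMap.smulRight (1 : ℂ →L[ℂ] ℂ) e))) z := by
    have h := (Complex.conjCLE.toContinuousLinearMap.hasFDerivAt
      (x := (fun w => starRingEnd ℂ (G w)) z)).comp z f2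
    have heq : (⇑Complex.conjCLE.toContinuousLinearMap ∘ fun w => starRingEnd ℂ (G w)) = G := by
      funext w; simp [Function.comp]
    rwa [heq] at h
  have huniq := f1.unique f3
  have e1 : d = starRingEnd ℂ e := by
    have := congrArg (fun L => L 1) huniq
    simpa using this
  have e2 : d * I = starRingEnd ℂ (e * I) := by
    have := congrArg (fun L => L I) huniq
    simpa [mul_comm] using this
  rw [map_mul, ← e1, Complex.conj_I] at e2
  have hdi : d * I = 0 := by linear_combination e2 / 2
  have := mul_eq_zero.mp hdi
  simpa [Complex.I_ne_zero] using this

lemma aux_const {G : ℂ → ℂ}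
    (hG : DifferentiableOn ℂ G (ball (0 : ℂ) 1))
    (hE : DifferentiableOn ℂ (fun w => starRingEnd ℂ (G w)) (ball (0 : ℂ) 1)) :
    ∀ z ∈ ball (0 : ℂ) 1, ∀ w ∈ ball (0 : ℂ) 1, G z = G w := by
  intro z hz w hw
  refine (convex_ball (0 : ℂ) 1).is_const_of_fderivWithin_eq_zero hG ?_ hz hw
  intro x hx
  have hGx : DifferentiableAt ℂ G x := hG.differentiableAt (isOpen_ball.mem_nhds hx)
  have hEx : DifferentiableAt ℂ (fun w => starRingEnd ℂ (G w)) x :=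
    hE.differentiableAt (isOpen_ball.mem_nhds hx)
  have h0 : deriv G x = 0 := aux_deriv_zero hGx hEx
  have h1 : HasFDerivAt G (0 : ℂ →L[ℂ] ℂ) x := by
    have h2 := hGx.hasDerivAt
    rw [h0] at h2
    have h3 := h2.hasFDerivAt
    have : (ContinuousLinearMap.toSpanSingleton ℂ (0 : ℂ)) = 0 := by
      ext1; simp
    rwa [this] at h3
  rw [fderivWithin_of_isOpen isOpen_ball hx, h1.fderiv]

/-- If φ = f + ḡ with f, g holomorphic on the unit disk, f nonconstant, and
a·φ + b·conj(φ) is constant on the disk with (a,b) ≠ (0,0), then |a| = |b| > 0 and,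
with λ := b/a, |λ| = 1 and φ + λ·conj(φ) is constant on the disk. -/
theorem statement16 (f g : ℂ → ℂ) (a b : ℂ) (hab : (a, b) ≠ (0, 0))
    (hf : DifferentiableOn ℂ f (ball (0 : ℂ) 1))
    (hg : DifferentiableOn ℂ g (ball (0 : ℂ) 1))
    (φ : ℂ → ℂ) (hφ : ∀ z : ℂ, φ z = f z + starRingEnd ℂ (g z))
    (hfnc : ¬ (∀ z ∈ ball (0 : ℂ) 1, ∀ w ∈ ball (0 : ℂ) 1, f z = f w))
    (hconst : ∃ C : ℂ, ∀ z ∈ ball (0 : ℂ) 1,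
      a * φ z + b * starRingEnd ℂ (φ z) = C) :
    ‖a‖ = ‖b‖ ∧ 0 < ‖a‖
      ∧ ‖b / a‖ = 1
      ∧ ∃ C : ℂ, ∀ z ∈ ball (0 : ℂ) 1,
          φ z + (b / a) * starRingEnd ℂ (φ z) = C := by
  obtain ⟨C, hC⟩ := hconst
  set F : ℂ → ℂ := fun z => a * f z + b * g z with hFdef
  set G : ℂ → ℂ := fun z => starRingEnd ℂ b * f z + starRingEnd ℂ a * g z with hGdef
  have hF : DifferentiableOn ℂ F (ball (0 : ℂ) 1) :=
    (hf.const_mul a).add (hg.const_mul b)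
  have hG : DifferentiableOn ℂ G (ball (0 : ℂ) 1) :=
    (hf.const_mul _).add (hg.const_mul _)
  -- conj (G z) = C - F z on the ball
  have hkey : ∀ z ∈ ball (0 : ℂ) 1, starRingEnd ℂ (G z) = C - F z := by
    intro z hz
    have h := hC z hz
    rw [hφ z] at h
    simp only [hGdef, hFdef, map_add, map_mul, RingHomCompTriple.comp_apply,
      RingHom.id_apply, Complex.conj_conj] at h ⊢
    linear_combination h
  have hGconj : DifferentiableOn ℂ (fun z => starRingEnd ℂ (G z)) (ball (0 : ℂ) 1) := by
    have : DifferentiableOn ℂ (fun z => C - F z) (ball (0 : ℂ) 1) :=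
      (differentiableOn_const C).sub hF
    exact this.congr hkey
  have hGconst := aux_const hG hGconj
  have hFconst : ∀ z ∈ ball (0 : ℂ) 1, ∀ w ∈ ball (0 : ℂ) 1, F z = F w := by
    intro z hz w hw
    have h1 := hkey z hz
    have h2 := hkey w hw
    have h3 := hGconst z hz w hw
    have : starRingEnd ℂ (G z) = starRingEnd ℂ (G w) := by rw [h3]
    rw [h1, h2] at this
    linear_combination -this
  have hdet : a * starRingEnd ℂ a = b * starRingEnd ℂ b := by
    by_contra hne
    apply hfnc
    intro z hz w hw
    have h1 := hFconst z hz w hw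
    have h2 := hGconst z hz w hw
    have h3 : (a * starRingEnd ℂ a - b * starRingEnd ℂ b) * (f z - f w) = 0 := by
      simp only [hFdef, hGdef] at h1 h2
      linear_combination (starRingEnd ℂ a) * h1 - b * h2
    rcases mul_eq_zero.mp h3 with h | h
    · exact absurd (by linear_combination h) hne
    · exact sub_eq_zero.mp h
  have habs : ‖a‖ = ‖b‖ := by
    have h1 : (Complex.normSq a : ℂ) = Complex.normSq b := by
      rw [← Complex.mul_conj, ← Complex.mul_conj]; exact hdet
    have h2 : Complex.normSq a = Complex.normSq b := by exact_mod_cast h1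
    rw [Complex.norm_def, Complex.norm_def, h2]
  have ha : a ≠ 0 := by
    intro h0
    have hb : b = 0 := by
      have h1 := habs
      rw [h0, norm_zero] at h1
      exact norm_eq_zero.mp h1.symm
    exact hab (by simp [h0, hb])
  have hapos : 0 < ‖a‖ := norm_pos_iff.mpr ha
  have hba : ‖b / a‖ = 1 := by
    rw [norm_div, ← habs, div_self (ne_of_gt hapos)]
  refine ⟨habs, hapos, hba, ⟨C / a, ?_⟩⟩
  intro z hz
  have h := hC z hz
  field_simp
  linear_combination h
end

section
/- Let m, n, p, q ∈ ℕ with 1 ≤ m < n, 1 ≤ p < q and n − m = q − p, let α, β, γ, δ ∈ ℂ with (α, β, γ, δ) ≠ (0, 0, 0, 0), and set φ(z) := α z^n + β z^m + γ z̄^p + δ z̄^q. Then there exists λ ∈ ℂ with |λ| = 1 such that the function z ↦ φ(z) + λ·conj(φ(z)) is constant on the open unit disk 𝔻 if and only if there exists λ ∈ ℂ with |λ| = 1 such that exactly one of the following holds: (i) p = n, β = δ = 0 and γ = −λ·conj(α) (so φ = α z^n − λ·conj(α) z̄^n); (ii) p = m (hence q = n), γ = −λ·conj(β) and δ = −λ·conj(α)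 (so φ = α z^n + β z^m − λ·(conj(α) z̄^n + conj(β) z̄^m)); or (iii) q = m, α = γ = 0 and δ = −λ·conj(β) (so φ = β z^m − λ·conj(β) z̄^m). (By a theorem of Axler and Čučković, for harmonic bounded φ this condition, for the nonconstant φ above, characterizes the normality of the Toeplitz operator T_φ on the Bergman space A²(𝔻).) -/
open Complex Metric

private lemma root_i_aux (k : ℕ) (hk : 1 ≤ k) :
    ∃ ω : ℂ, ‖ω‖ = 1 ∧ ω ^ k = Complex.I := by
  refine ⟨Complex.exp (Real.pi * Complex.I / (2 * k)), ?_, ?_⟩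
  · rw [Complex.norm_exp]
    have : (Real.pi * Complex.I / (2 * k)).re = 0 := by simp [Complex.div_re]
    rw [this, Real.exp_zero]
  · rw [← Complex.exp_nat_mul]
    have hk0 : (k : ℂ) ≠ 0 := Nat.cast_ne_zero.mpr (by omega)
    have : (k : ℂ) * (Real.pi * Complex.I / (2 * k)) = (Real.pi / 2 : ℝ) * Complex.I := by
      field_simp; push_cast; ring
    rw [this, Complex.exp_mul_I]
    norm_num

private lemma pairzero_aux (S T : ℂ) (h1 : S + T = 0)
    (h2 : S * Complex.I + T * (-Complex.I) = 0) : S = 0 ∧ T = 0 := by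
  have h3 : S * Complex.I = T * Complex.I := by linear_combination h2
  have h4 : S = T := mul_right_cancel₀ Complex.I_ne_zero h3
  exact ⟨by linear_combination (1/2 : ℂ) * h1 + (1/2 : ℂ) * h4,
    by linear_combination (1/2 : ℂ) * h1 - (1/2 : ℂ) * h4⟩

private lemma coeffs_aux (m n p q : ℕ) (α β γ δ lam : ℂ)
    (H : ∀ z ∈ ball (0 : ℂ) 1,
      α * z ^ n + β * z ^ m + γ * (starRingEnd ℂ z) ^ p + δ * (starRingEnd ℂ z) ^ q
      + lam * (starRingEnd ℂ α * (starRingEnd ℂ z) ^ n + starRingEnd ℂ β * (starRingEnd ℂ z) ^ m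
        + starRingEnd ℂ γ * z ^ p + starRingEnd ℂ δ * z ^ q) = 0) :
    ∀ k : ℕ, ∀ ω : ℂ, ‖ω‖ = 1 →
      (if k = n then α * ω ^ n + lam * starRingEnd ℂ α * (starRingEnd ℂ ω) ^ n else 0)
      + (if k = m then β * ω ^ m + lam * starRingEnd ℂ β * (starRingEnd ℂ ω) ^ m else 0)
      + (if k = p then lam * starRingEnd ℂ γ * ω ^ p + γ * (starRingEnd ℂ ω) ^ p else 0)
      + (if k = q then lam * starRingEnd ℂ δ * ω ^ q + δ * (starRingEnd ℂ ω) ^ q else 0)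
      = 0 := by
  intro k ω hω
  set P : Polynomial ℂ :=
    Polynomial.C (α * ω ^ n + lam * starRingEnd ℂ α * (starRingEnd ℂ ω) ^ n) * Polynomial.X ^ n
    + Polynomial.C (β * ω ^ m + lam * starRingEnd ℂ β * (starRingEnd ℂ ω) ^ m) * Polynomial.X ^ m
    + Polynomial.C (lam * starRingEnd ℂ γ * ω ^ p + γ * (starRingEnd ℂ ω) ^ p) * Polynomial.X ^ p
    + Polynomial.C (lam * starRingEnd ℂ δ * ω ^ q + δ * (starRingEnd ℂ ω) ^ q) * Polynomial.X ^ q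
    with hP
  have hPz : P = 0 := by
    apply Polynomial.eq_zero_of_infinite_isRoot
    apply Set.Infinite.mono (s := (fun t : ℝ => (t : ℂ)) '' Set.Ioo 0 1)
    · rintro z ⟨t, ht, rfl⟩
      have hz : (t : ℂ) * ω ∈ ball (0 : ℂ) 1 := by
        rw [mem_ball, dist_zero_right]
        calc ‖(t : ℂ) * ω‖ = |t| * ‖ω‖ := by
              simp [map_mul]
          _ < 1 := by rw [hω, mul_one, abs_of_pos ht.1]; exact ht.2
      have h := H ((t : ℂ) * ω) hz
      simp only [Set.mem_setOf_eq, Polynomial.IsRoot, hP]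
      simp only [Polynomial.eval_add, Polynomial.eval_mul, Polynomial.eval_C,
        Polynomial.eval_pow, Polynomial.eval_X]
      have hc : starRingEnd ℂ ((t : ℂ) * ω) = (t : ℂ) * starRingEnd ℂ ω := by
        rw [map_mul, Complex.conj_ofReal]
      rw [hc] at h
      ring_nf
      ring_nf at h
      linear_combination h
    · apply Set.Infinite.image
      · exact fun a _ b _ hab => Complex.ofReal_injective hab
      · exact Set.Ioo_infinite (by norm_num)
  have hco := congrArg (fun Q : Polynomial ℂ => Q.coeff k) hPz
  simp only [hP, Polynomial.coeff_add, Polynomial.coeff_C_mul, Polynomial.coeff_X_pow,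
    Polynomial.coeff_zero, mul_ite, mul_one, mul_zero] at hco
  exact hco

/-- Characterization of the symbols φ = α z^n + β z^m + γ z̄^p + δ z̄^q
(1 ≤ m < n, 1 ≤ p < q, n - m = q - p, not identically zero) for which there exists a
unimodular λ with φ + λ·conj(φ) constant on the unit disk — equivalently, for which the
Toeplitz operator T_φ is normal on the Bergman space. -/
theorem statement17 (m n p q : ℕ) (hm : 1 ≤ m) (hmn : m < n) (hp : 1 ≤ p) (hpq : p < q)
    (hg : n - m = q - p) (α β γ δ : ℂ) (hnz : (α, β, γ, δ) ≠ (0, 0, 0, 0))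
    (φ : ℂ → ℂ)
    (hφ : ∀ z : ℂ, φ z = α * z ^ n + β * z ^ m
        + γ * (starRingEnd ℂ z) ^ p + δ * (starRingEnd ℂ z) ^ q) :
    (∃ lam : ℂ, ‖lam‖ = 1 ∧ ∃ C : ℂ, ∀ z ∈ ball (0 : ℂ) 1,
        φ z + lam * starRingEnd ℂ (φ z) = C)
    ↔ ∃ lam : ℂ, ‖lam‖ = 1 ∧
        ((p = n ∧ β = 0 ∧ δ = 0 ∧ γ = -lam * starRingEnd ℂ α)
          ∨ (p = m ∧ γ = -lam * starRingEnd ℂ β ∧ δ = -lam * starRingEnd ℂ α)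
          ∨ (q = m ∧ α = 0 ∧ γ = 0 ∧ δ = -lam * starRingEnd ℂ β)) := by
  have hn0 : n ≠ 0 := by omega
  have hm0 : m ≠ 0 := by omega
  have hp0 : p ≠ 0 := by omega
  have hq0 : q ≠ 0 := by omega
  constructor
  · rintro ⟨lam, hlam, C, hC⟩
    refine ⟨lam, hlam, ?_⟩
    have h00 : C = 0 := by
      have h := hC 0 (by simp)
      rw [hφ 0] at h
      simpa [zero_pow hn0, zero_pow hm0, zero_pow hp0, zero_pow hq0] using h.symm
    have H : ∀ z ∈ ball (0 : ℂ) 1,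
        α * z ^ n + β * z ^ m + γ * (starRingEnd ℂ z) ^ p + δ * (starRingEnd ℂ z) ^ q
        + lam * (starRingEnd ℂ α * (starRingEnd ℂ z) ^ n
          + starRingEnd ℂ β * (starRingEnd ℂ z) ^ m
          + starRingEnd ℂ γ * z ^ p + starRingEnd ℂ δ * z ^ q) = 0 := by
      intro z hz
      have h := hC z hz
      rw [hφ z, h00] at h
      simp only [map_add, map_mul, map_pow, Complex.conj_conj] at h
      linear_combination h
    have key := coeffs_aux m n p q α β γ δ lam H
    have pair : ∀ k : ℕ, 1 ≤ k → ∀ S T : ℂ,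
        (∀ ω : ℂ, ‖ω‖ = 1 → S * ω ^ k + T * (starRingEnd ℂ ω) ^ k = 0) →
        S = 0 ∧ T = 0 := by
      intro k hk S T h
      obtain ⟨ω, hω1, hωk⟩ := root_i_aux k hk
      have e1 := h 1 (by simp)
      have e2 := h ω hω1
      have hcω : (starRingEnd ℂ ω) ^ k = -Complex.I := by
        rw [← map_pow, hωk, Complex.conj_I]
      rw [hωk, hcω] at e2
      simp only [one_pow, map_one, mul_one] at e1
      exact pairzero_aux S T e1 e2
    by_cases h1 : p = m
    · -- case (ii): p = m, q = n
      have hqn : q = n := by omega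
      subst h1; subst hqn
      have hqp : q ≠ p := by omega
      have hpq' : p ≠ q := by omega
      have eq1 := pair q (by omega) (α + lam * starRingEnd ℂ δ)
        (lam * starRingEnd ℂ α + δ) (fun ω hω => by
          have h := key q ω hω
          simp [hqp] at h
          linear_combination h)
      have eq2 := pair p (by omega) (β + lam * starRingEnd ℂ γ)
        (lam * starRingEnd ℂ β + γ) (fun ω hω => by
          have h := key p ω hω
          simp [hpq'] at h
          linear_combination h)
      exact Or.inr (Or.inl ⟨rfl, by linear_combination eq2.2, by linear_combination eq1.2⟩)
    · by_cases h2 : p = n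
      · -- case (i)
        subst h2
        have hpq'' : p ≠ q := by omega
        have hpm : p ≠ m := by omega
        have hmp : m ≠ p := by omega
        have hmq : m ≠ q := by omega
        have hqp : q ≠ p := by omega
        have hqm : q ≠ m := by omega
        have eq1 := pair p (by omega) (α + lam * starRingEnd ℂ γ)
          (lam * starRingEnd ℂ α + γ) (fun ω hω => by
            have h := key p ω hω
            simp [hpq'', hpm] at h
            linear_combination h)
        have eq2 := pair m (by omega) β (lam * starRingEnd ℂ β) (fun ω hω => by
            have h := key m ω hω
            simp [hmp, hmq] at h
            linear_combination h)
        have eq3 := pair q (by omega) (lam * starRingEnd ℂ δ) δ (fun ω hω => by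
            have h := key q ω hω
            simp [hqp, hqm] at h
            linear_combination h)
        exact Or.inl ⟨rfl, eq2.1, eq3.2, by linear_combination eq1.2⟩
      · by_cases h3 : q = m
        · -- case (iii)
          subst h3
          have hqn' : q ≠ n := by omega
          have hqp : q ≠ p := by omega
          have hnq : n ≠ q := by omega
          have hnp : n ≠ p := by omega
          have hpn : p ≠ n := by omega
          have hpq3 : p ≠ q := by omega
          have eq1 := pair q (by omega) (β + lam * starRingEnd ℂ δ)
            (lam * starRingEnd ℂ β + δ) (fun ω hω => by
              have h := key q ω hω
              simp [hqn', hqp] at h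
              linear_combination h)
          have eq2 := pair n (by omega) α (lam * starRingEnd ℂ α) (fun ω hω => by
              have h := key n ω hω
              simp [hnq, hnp] at h
              linear_combination h)
          have eq3 := pair p (by omega) (lam * starRingEnd ℂ γ) γ (fun ω hω => by
              have h := key p ω hω
              simp [hpn, hpq3] at h
              linear_combination h)
          exact Or.inr (Or.inr ⟨rfl, eq2.1, eq3.2, by linear_combination eq1.2⟩)
        · -- all four exponents distinct : contradiction with hnz
          exfalso
          have hnm : n ≠ m := by omega
          have hnp : n ≠ p := by omega
          have hnq : n ≠ q := by omega
          have hmp : m ≠ p := by omega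
          have hmq : m ≠ q := by omega
          have hpn : p ≠ n := by omega
          have hpm : p ≠ m := by omega
          have hpq4 : p ≠ q := by omega
          have hqn : q ≠ n := by omega
          have hqm : q ≠ m := by omega
          have hqp : q ≠ p := by omega
          have hmn2 : m ≠ n := by omega
          have eq1 := pair n (by omega) α (lam * starRingEnd ℂ α) (fun ω hω => by
              have h := key n ω hω
              simp [hnm, hnp, hnq] at h
              linear_combination h)
          have eq2 := pair m (by omega) β (lam * starRingEnd ℂ β) (fun ω hω => by
              have h := key m ω hω
              simp [hmp, hmq, hmn2] at h
              linear_combination h)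
          have eq3 := pair p (by omega) (lam * starRingEnd ℂ γ) γ (fun ω hω => by
              have h := key p ω hω
              simp [hpn, hpm, hpq4] at h
              linear_combination h)
          have eq4 := pair q (by omega) (lam * starRingEnd ℂ δ) δ (fun ω hω => by
              have h := key q ω hω
              simp [hqn, hqm, hqp] at h
              linear_combination h)
          exact hnz (by rw [eq1.1, eq2.1, eq3.2, eq4.2])
  · rintro ⟨lam, hlam, hcase⟩
    have hlam1 : lam * starRingEnd ℂ lam = 1 := by
      rw [Complex.mul_conj, Complex.normSq_eq_norm_sq, hlam]; norm_num
    refine ⟨lam, hlam, 0, ?_⟩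
    intro z hz
    rw [hφ z]
    rcases hcase with ⟨hpn, hβ, hδ, hγ⟩ | ⟨hpm, hγ, hδ⟩ | ⟨hqm, hα, hγ, hδ⟩
    · subst hpn; subst hβ; subst hδ; subst hγ
      simp only [map_add, map_mul, map_pow, map_neg, map_zero, Complex.conj_conj]
      linear_combination (-(α * z ^ p)) * hlam1
    · have hqn : q = n := by omega
      subst hpm; subst hqn; subst hγ; subst hδ
      simp only [map_add, map_mul, map_pow, map_neg, map_zero, Complex.conj_conj]
      linear_combination (-(α * z ^ q) - β * z ^ p) * hlam1
    · subst hqm; subst hα; subst hγ; subst hδ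
      simp only [map_add, map_mul, map_pow, map_neg, map_zero, Complex.conj_conj]
      linear_combination (-(β * z ^ q)) * hlam1
end
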